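/- Let x be the least squares solution of the full system AX = B with A ∈ Mat(P, Q, ℝ) of full column rank. Partition X = (X₁, X₂) and A = [A₁ | A₂] accordingly, and suppose X₂ is fixed to a known value v. Then the least squares minimizer over X₁ of ‖A₁X₁ + A₂v − B‖ satisfies the normal equations A₁ᵀA₁ X₁ = A₁ᵀ(B − A₂v), and it equals the X₁-component of x if and only if A₁ᵀA₂(v − x₂) = 0, where x = (x₁, x₂). -/

import Mathlib

open Matrix

/-- Euclidean (l²) norm on `Fin n → ℝ`. -/
noncomputable def euclNorm {n : ℕ} (v : Fin n → ℝ) : ℝ :=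
  Real.sqrt (∑ i, v i ^ 2)

lemma sq_sum_le_of_enorm_le {n : ℕ} {a b : Fin n → ℝ} (h : euclNorm a ≤ euclNorm b) :
    ∑ i, a i ^ 2 ≤ ∑ i, b i ^ 2 := by
  have hb : 0 ≤ ∑ i, b i ^ 2 := Finset.sum_nonneg fun i _ => sq_nonneg _
  simp only [euclNorm] at h
  by_contra hlt
  push_neg at hlt
  exact absurd h (not_le.mpr (Real.sqrt_lt_sqrt hb hlt))

/-- Normal equations from minimality. -/
lemma normal_of_min {P Q : ℕ} (A : Matrix (Fin P) (Fin Q) ℝ) (c : Fin P → ℝ)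
    (w : Fin Q → ℝ)
    (h : ∀ X, ∑ i, (A.mulVec w + c) i ^ 2 ≤ ∑ i, (A.mulVec X + c) i ^ 2) :
    A.transpose.mulVec (A.mulVec w + c) = 0 := by
  set r : Fin P → ℝ := A.mulVec w + c with hr
  have key : ∀ d : Fin Q → ℝ, ∑ i, A.mulVec d i * r i = 0 := by
    intro d
    set s : ℝ := ∑ i, A.mulVec d i * r i with hs
    set q : ℝ := ∑ i, A.mulVec d i ^ 2 with hq
    have hqnn : 0 ≤ q := Finset.sum_nonneg fun i _ => sq_nonneg _
    have expand : ∀ t : ℝ,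
        ∑ i, (A.mulVec (w + t • d) + c) i ^ 2
          = (∑ i, r i ^ 2) + 2 * t * s + t ^ 2 * q := by
      intro t
      have hpt : ∀ i, (A.mulVec (w + t • d) + c) i = r i + t * A.mulVec d i := by
        intro i
        simp [Matrix.mulVec_add, Matrix.mulVec_smul, hr]
        ring
      simp only [hpt]
      rw [hs, hq, Finset.mul_sum, Finset.mul_sum, ← Finset.sum_add_distrib,
        ← Finset.sum_add_distrib]
      apply Finset.sum_congr rfl
      intro i _
      ring
    have hineq : ∀ t : ℝ, 0 ≤ 2 * t * s + t ^ 2 * q := by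
      intro t
      have := h (w + t • d)
      rw [expand t] at this
      linarith
    have hq1 : (0:ℝ) < q + 1 := by linarith
    have h1 := hineq (-s / (q + 1))
    have h2 : 0 ≤ (2 * (-s / (q + 1)) * s + (-s / (q + 1)) ^ 2 * q) * (q + 1) ^ 2 :=
      mul_nonneg h1 (by positivity)
    have h3 : (2 * (-s / (q + 1)) * s + (-s / (q + 1)) ^ 2 * q) * (q + 1) ^ 2
        = -(s ^ 2) * (q + 2) := by
      field_simp
      ring
    rw [h3] at h2
    nlinarith [sq_nonneg s]
  funext j
  have hj := key (Pi.single j 1)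
  have hsingle : ∀ i, A.mulVec (Pi.single j 1) i = A i j := by
    intro i
    simp [Matrix.mulVec, dotProduct, Pi.single_apply]
  simp only [hsingle] at hj
  simpa [Matrix.mulVec, dotProduct, Matrix.transpose_apply] using hj

theorem stmt_13 (P Q₁ Q₂ : ℕ)
    (A₁ : Matrix (Fin P) (Fin Q₁) ℝ) (A₂ : Matrix (Fin P) (Fin Q₂) ℝ)
    (hrank : (Matrix.fromCols A₁ A₂).rank = Q₁ + Q₂)
    (B : Fin P → ℝ) (x₁ : Fin Q₁ → ℝ) (x₂ : Fin Q₂ → ℝ)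
    (hfull : ∀ (X₁ : Fin Q₁ → ℝ) (X₂ : Fin Q₂ → ℝ),
      euclNorm (A₁.mulVec x₁ + A₂.mulVec x₂ - B)
        ≤ euclNorm (A₁.mulVec X₁ + A₂.mulVec X₂ - B))
    (v : Fin Q₂ → ℝ) (w : Fin Q₁ → ℝ)
    (hw : ∀ X₁ : Fin Q₁ → ℝ,
      euclNorm (A₁.mulVec w + A₂.mulVec v - B)
        ≤ euclNorm (A₁.mulVec X₁ + A₂.mulVec v - B)) :
    (A₁.transpose * A₁).mulVec w = A₁.transpose.mulVec (B - A₂.mulVec v) ∧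
    (w = x₁ ↔ A₁.transpose.mulVec (A₂.mulVec (v - x₂)) = 0) := by
  have hnw : A₁.transpose.mulVec (A₁.mulVec w + (A₂.mulVec v - B)) = 0 := by
    apply normal_of_min
    intro X
    have := sq_sum_le_of_enorm_le (hw X)
    simpa [add_sub_assoc] using this
  have hnx : A₁.transpose.mulVec (A₁.mulVec x₁ + (A₂.mulVec x₂ - B)) = 0 := by
    apply normal_of_min
    intro X
    have := sq_sum_le_of_enorm_le (hfull X x₂)
    simpa [add_sub_assoc] using this
  simp only [Matrix.mulVec_add, Matrix.mulVec_sub] at hnw hnx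
  have firstpart : (A₁.transpose * A₁).mulVec w = A₁.transpose.mulVec (B - A₂.mulVec v) := by
    rw [← Matrix.mulVec_mulVec, Matrix.mulVec_sub]
    linear_combination (norm := module) hnw
  have hx1eq : (A₁.transpose * A₁).mulVec x₁ = A₁.transpose.mulVec (B - A₂.mulVec x₂) := by
    rw [← Matrix.mulVec_mulVec, Matrix.mulVec_sub]
    linear_combination (norm := module) hnx
  refine ⟨firstpart, ?_, ?_⟩
  · intro hwx
    subst hwx
    rw [Matrix.mulVec_sub, Matrix.mulVec_sub]
    linear_combination (norm := module) hnw - hnx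
  · intro horth
    rw [Matrix.mulVec_sub, Matrix.mulVec_sub] at horth
    have hker : (A₁.transpose * A₁).mulVec (w - x₁) = 0 := by
      rw [← Matrix.mulVec_mulVec, Matrix.mulVec_sub, Matrix.mulVec_sub]
      linear_combination (norm := module) hnw - hnx - horth
    set u := w - x₁ with hu
    have hAu : A₁.mulVec u = 0 := by
      have hdot : A₁.mulVec u ⬝ᵥ A₁.mulVec u = 0 := by
        have h0 : u ⬝ᵥ (A₁.transpose * A₁).mulVec u = 0 := by rw [hker]; simp
        rwa [← Matrix.mulVec_mulVec, Matrix.dotProduct_mulVec, Matrix.vecMul_transpose] at h0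
      funext i
      have hnn : ∀ j ∈ Finset.univ, (0:ℝ) ≤ A₁.mulVec u j ^ 2 := fun j _ => sq_nonneg _
      have hz := (Finset.sum_eq_zero_iff_of_nonneg hnn).mp (by
        simpa [dotProduct, sq, -dotProduct_self_eq_zero] using hdot) i (Finset.mem_univ i)
      simpa using pow_eq_zero_iff (n := 2) (by norm_num) |>.mp hz
    have hinj : Function.Injective (Matrix.fromCols A₁ A₂).mulVec := by
      rw [← Matrix.coe_mulVecLin, ← LinearMap.ker_eq_bot]
      rw [Matrix.rank] at hrank
      have hdim : Module.finrank ℝ ((Fin Q₁ ⊕ Fin Q₂) → ℝ) = Q₁ + Q₂ := by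
        simp [Module.finrank_pi]
      have hrn := LinearMap.finrank_range_add_finrank_ker (Matrix.fromCols A₁ A₂).mulVecLin
      rw [hdim, hrank] at hrn
      have hk0 : Module.finrank ℝ (LinearMap.ker (Matrix.fromCols A₁ A₂).mulVecLin) = 0 := by
        omega
      exact Submodule.finrank_eq_zero.mp hk0
    have heq : (Matrix.fromCols A₁ A₂).mulVec (Sum.elim u 0)
        = (Matrix.fromCols A₁ A₂).mulVec (Sum.elim 0 0) := by
      rw [Matrix.fromCols_mulVec_sumElim, Matrix.fromCols_mulVec_sumElim]
      simp [hAu]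
    have hse := hinj heq
    have hu0 : u = 0 := by
      funext j
      have := congrFun hse (Sum.inl j)
      simpa using this
    exact sub_eq_zero.mp hu0
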